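/- Let 𝔠 > 0, z > 0, T := 𝔠²/z, and define a₁ := K₃(z)/K₂(z), a₂ := −a₁² + 6a₁/z + 1, a₃ := −a₁³ + 6a₁²/z − 6a₁/z² + a₁ − 1/z, where K_α(z) := ∫₀^∞ e^{−z cosh t} cosh(αt) dt. Assume a₁ > 0, a₃ > 0, a₂ − a₁/z > 0 and a₃ + a₂/z − a₁/z² > 0. Let u₁ ∈ ℝ, u₀ := √(𝔠²+u₁²), M := √((1/z)(a₂ − a₁/z)(a₃ + a₂/z − a₁/z²)), A₂ := a₃u₀²/𝔠² + a₂/z − a₁/z², and λ₅ := (a₃u₀u₁ + 𝔠²M)/(𝔠A₂). Then λ₅ = 0 if and only if u₁ = −√( T · (za₂ − a₁)/(za₃) ). -/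

import Mathlib

open MeasureTheory

/-- The modified Bessel function K_α(z) = ∫₀^∞ e^{−z cosh t} cosh(αt) dt. -/
noncomputable def Kb (α z : ℝ) : ℝ :=
  ∫ t in Set.Ioi (0 : ℝ), Real.exp (-z * Real.cosh t) * Real.cosh (α * t)

/-- λ₅ = 0 if and only if u₁ = −√(T(za₂ − a₁)/(za₃)). -/
theorem lambda_five_eq_zero_iff (c z T a₁ a₂ a₃ u₁ u₀ M A₂ lam₅ : ℝ)
    (hc : 0 < c) (hz : 0 < z) (hT : T = c ^ 2 / z)
    (ha₁ : a₁ = Kb 3 z / Kb 2 z)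
    (ha₂ : a₂ = -a₁ ^ 2 + 6 * a₁ / z + 1)
    (ha₃ : a₃ = -a₁ ^ 3 + 6 * a₁ ^ 2 / z - 6 * a₁ / z ^ 2 + a₁ - 1 / z)
    (hpos1 : 0 < a₁) (hpos3 : 0 < a₃)
    (hpos2 : 0 < a₂ - a₁ / z) (hpos4 : 0 < a₃ + a₂ / z - a₁ / z ^ 2)
    (hu₀ : u₀ = Real.sqrt (c ^ 2 + u₁ ^ 2))
    (hM : M = Real.sqrt ((1 / z) * (a₂ - a₁ / z) * (a₃ + a₂ / z - a₁ / z ^ 2)))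
    (hA₂ : A₂ = a₃ * u₀ ^ 2 / c ^ 2 + a₂ / z - a₁ / z ^ 2)
    (hlam : lam₅ = (a₃ * u₀ * u₁ + c ^ 2 * M) / (c * A₂)) :
    lam₅ = 0 ↔ u₁ = -Real.sqrt (T * (z * a₂ - a₁) / (z * a₃)) := by
  clear ha₁ ha₂ ha₃
  have hz' : z ≠ 0 := hz.ne'
  have hc' : c ≠ 0 := hc.ne'
  obtain ⟨s, hs⟩ : ∃ s : ℝ, s = T * (z * a₂ - a₁) / (z * a₃) := ⟨_, rfl⟩
  rw [show T * (z * a₂ - a₁) / (z * a₃) = s from hs.symm]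
  have hza : 0 < z * a₂ - a₁ := by
    have h1 : z * (a₂ - a₁ / z) = z * a₂ - a₁ := by field_simp
    have h2 := mul_pos hz hpos2
    linarith
  have hTpos : 0 < T := by rw [hT]; positivity
  have hs_pos : 0 < s := hs ▸ div_pos (mul_pos hTpos hza) (mul_pos hz hpos3)
  have hM2 : M ^ 2 = (1 / z) * (a₂ - a₁ / z) * (a₃ + a₂ / z - a₁ / z ^ 2) := by
    rw [hM, Real.sq_sqrt]; positivity
  have hMpos : 0 < M := by
    rw [hM]; apply Real.sqrt_pos.mpr; positivity
  have hu₀2 : u₀ ^ 2 = c ^ 2 + u₁ ^ 2 := by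
    rw [hu₀, Real.sq_sqrt]; positivity
  have hu₀pos : 0 < u₀ := by
    rw [hu₀]; apply Real.sqrt_pos.mpr; positivity
  have hA₂pos : 0 < A₂ := by
    have h1 : a₂ / z - a₁ / z ^ 2 = (a₂ - a₁ / z) / z := by field_simp
    rw [hA₂, add_sub_assoc, h1]
    positivity
  have hden : c * A₂ ≠ 0 := (mul_pos hc hA₂pos).ne'
  have hkey : a₃ ^ 2 * (c ^ 2 + s) * s = c ^ 4 * M ^ 2 := by
    rw [hM2, hs, hT]; field_simp; ring
  have hr : Real.sqrt s ^ 2 = s := Real.sq_sqrt hs_pos.le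
  rw [hlam, div_eq_zero_iff, or_iff_left hden]
  constructor
  · intro h
    have hsq : (a₃ * u₀ * u₁) ^ 2 = (c ^ 2 * M) ^ 2 := by
      linear_combination (a₃ * u₀ * u₁ - c ^ 2 * M) * h
    have hfac : (a₃ ^ 2 * (u₁ ^ 2 - s)) * (c ^ 2 + u₁ ^ 2 + s) = 0 := by
      linear_combination hsq - a₃ ^ 2 * u₁ ^ 2 * hu₀2 - hkey
    have h2 : u₁ ^ 2 = s := by
      rcases mul_eq_zero.mp hfac with h' | h'
      · have := mul_eq_zero.mp h'
        rcases this with h'' | h''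
        · exact absurd h'' (pow_ne_zero 2 hpos3.ne')
        · linarith
      · nlinarith
    have hneg : u₁ < 0 := by
      by_contra h'
      push_neg at h'
      have hmul : 0 ≤ a₃ * u₀ * u₁ := mul_nonneg (mul_nonneg hpos3.le hu₀pos.le) h'
      have hcm : 0 < c ^ 2 * M := mul_pos (pow_pos hc 2) hMpos
      linarith
    have hss : Real.sqrt s = -u₁ := by
      rw [← h2, Real.sqrt_sq_eq_abs, abs_of_neg hneg]
    rw [hss]; ring
  · intro h
    have hu₁2 : u₁ ^ 2 = s := by rw [h]; linear_combination hr
    have key : a₃ * u₀ * Real.sqrt s = c ^ 2 * M := by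
      have h1 : (a₃ * u₀ * Real.sqrt s) ^ 2 = (c ^ 2 * M) ^ 2 := by
        have h2 : (a₃ * u₀ * Real.sqrt s) ^ 2 = a₃ ^ 2 * (c ^ 2 + s) * s := by
          rw [mul_pow, mul_pow, hr, hu₀2, hu₁2]
        rw [h2, hkey]; ring
      have h3 : (0:ℝ) ≤ a₃ * u₀ * Real.sqrt s := by positivity
      have h4 : (0:ℝ) ≤ c ^ 2 * M := by positivity
      calc a₃ * u₀ * Real.sqrt s = Real.sqrt ((a₃ * u₀ * Real.sqrt s) ^ 2) :=
            (Real.sqrt_sq h3).symm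
        _ = Real.sqrt ((c ^ 2 * M) ^ 2) := by rw [h1]
        _ = c ^ 2 * M := Real.sqrt_sq h4
    rw [h]
    linear_combination -key
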